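/- The squared Chebyshev radius ρ² = inf_{z ∈ Z} sup_{f ∈ C_y} ‖Q̃f − z‖² equals the infimum of a·(1 − ‖T Λ†y‖²) + b over all a, b ≥ 0 satisfying both: (1) a‖Th‖² ≥ ‖Q̃h‖² for all h ∈ N, and (2) a‖Th‖² + 2 a t ⟨Th, T Λ†y⟩ + b t² ≥ 0 for all h ∈ N and all t ∈ ℝ. -/

import Mathlib

open scoped ENNReal
open scoped RealInnerProductSpace NNReal

set_option maxHeartbeats 1000000

/-- semidefinite characterization of the squared Chebyshev radius in
the one-hyperellipsoid case: it equals the infimum of `a(1 − ‖TΛ†y‖²) + b` over all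
`a, b ≥ 0` satisfying the two quadratic-form constraints. -/
theorem statement12
    {F G Z : Type*}
    [NormedAddCommGroup F] [InnerProductSpace ℝ F] [FiniteDimensional ℝ F]
    [NormedAddCommGroup G] [InnerProductSpace ℝ G] [FiniteDimensional ℝ G]
    [NormedAddCommGroup Z] [InnerProductSpace ℝ Z] [FiniteDimensional ℝ Z]
    {m : ℕ}
    (T : F →ₗ[ℝ] G) (Qt : F →ₗ[ℝ] Z) (Λ : F →ₗ[ℝ] (Fin m → ℝ))
    (hker : LinearMap.ker T ⊓ LinearMap.ker Λ = ⊥)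
    (y : Fin m → ℝ)
    (hCne : {f : F | ‖T f‖ ≤ 1 ∧ Λ f = y}.Nonempty)
    -- `w = Λ†y` is the minimal-norm solution of `Λ f = y`
    (w : F) (hwmem : w ∈ (LinearMap.ker Λ)ᗮ) (hwΛ : Λ w = y) :
    (⨅ z : Z, ⨆ f ∈ {f : F | ‖T f‖ ≤ 1 ∧ Λ f = y},
        ENNReal.ofReal (‖Qt f - z‖ ^ 2)) =
      ⨅ p : {p : ℝ × ℝ // 0 ≤ p.1 ∧ 0 ≤ p.2 ∧
          (∀ h ∈ LinearMap.ker Λ, ‖Qt h‖ ^ 2 ≤ p.1 * ‖T h‖ ^ 2) ∧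
          (∀ h ∈ LinearMap.ker Λ, ∀ t : ℝ,
            0 ≤ p.1 * ‖T h‖ ^ 2 + 2 * p.1 * t * (inner ℝ (T h) (T w) : ℝ) +
              p.2 * t ^ 2)},
        ENNReal.ofReal ((p : ℝ × ℝ).1 * (1 - ‖T w‖ ^ 2) + (p : ℝ × ℝ).2) := by
  classical
  set N : Submodule ℝ F := LinearMap.ker Λ with hNdef
  -- injectivity of T on N
  have hinj : ∀ u ∈ N, T u = 0 → u = 0 := by
    intro u hu hTu
    have hmem : u ∈ LinearMap.ker T ⊓ LinearMap.ker Λ :=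
      ⟨LinearMap.mem_ker.mpr hTu, hu⟩
    rw [hker] at hmem
    simpa using hmem
  -- antilipschitz bound on N
  obtain ⟨c, hc⟩ : ∃ c : ℝ≥0, ∀ u ∈ N, ‖u‖ ≤ c * ‖T u‖ := by
    set T' : N →ₗ[ℝ] G := T.comp N.subtype with hT'
    have hkerT' : LinearMap.ker T' = ⊥ := by
      rw [LinearMap.ker_eq_bot]
      intro u v huv
      have h0 : T ((u : F) - (v : F)) = 0 := by
        have : T (u : F) = T (v : F) := huv
        simp [map_sub, this]
      have := hinj ((u : F) - (v : F)) (N.sub_mem u.2 v.2) h0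
      exact Subtype.ext (sub_eq_zero.mp this)
    obtain ⟨K, -, hK⟩ := T'.exists_antilipschitzWith hkerT'
    refine ⟨K, fun u hu => ?_⟩
    have := hK.le_mul_norm (map_zero T') ⟨u, hu⟩
    simpa [hT'] using this
  -- the subspace V = T(N) and the projection of Tw onto it
  set V : Submodule ℝ G := N.map T with hVdef
  obtain ⟨h1, hh1N, hTh1⟩ : ∃ h1 ∈ N, T h1 = (V.orthogonalProjectionOnto (T w) : G) := by
    have hmem : (V.orthogonalProjectionOnto (T w) : G) ∈ V := (V.orthogonalProjectionOnto (T w)).2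
    rcases Submodule.mem_map.mp hmem with ⟨h1, hh1, hTh1⟩
    exact ⟨h1, hh1, hTh1⟩
  obtain ⟨f0, hf0def⟩ : ∃ f0 : F, f0 = w - h1 := ⟨_, rfl⟩
  have hTf0 : T f0 = T w - T h1 := by rw [hf0def, map_sub]
  have hperp : ∀ h ∈ N, ⟪T f0, T h⟫ = 0 := by
    intro h hh
    have hmemV : T h ∈ V := Submodule.mem_map_of_mem hh
    have horth : T w - T h1 ∈ Vᗮ := by
      rw [hTh1]; exact Submodule.sub_starProjection_mem_orthogonal (K := V) (T w)
    have := (Submodule.mem_orthogonal V (T w - T h1)).mp horth (T h) hmemV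
    rw [hTf0, real_inner_comm]; exact this
  have hΛf0 : Λ f0 = y := by
    have h0 : Λ h1 = 0 := hh1N
    rw [hf0def, map_sub, hwΛ, h0, sub_zero]
  -- Pythagoras: ‖Tw‖² = ‖Tf0‖² + ‖Th1‖²
  have hTw_eq : T w = T f0 + T h1 := by rw [hTf0]; abel
  have hpyth_w : ‖T w‖ ^ 2 = ‖T f0‖ ^ 2 + ‖T h1‖ ^ 2 := by
    have h0 : ⟪T f0, T h1⟫ = 0 := hperp h1 hh1N
    rw [hTw_eq, @norm_add_sq_real, h0]; ring
  -- decomposition of any feasible f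
  have hdecomp : ∀ f : F, Λ f = y → (f - f0) ∈ N ∧
      ‖T f‖ ^ 2 = ‖T f0‖ ^ 2 + ‖T (f - f0)‖ ^ 2 := by
    intro f hf
    have hmem : f - f0 ∈ N := by
      have : Λ (f - f0) = 0 := by rw [map_sub, hf, hΛf0, sub_self]
      exact LinearMap.mem_ker.mpr this
    refine ⟨hmem, ?_⟩
    have hTf : T f = T f0 + T (f - f0) := by
      rw [map_sub]; abel
    rw [hTf, @norm_add_sq_real, hperp _ hmem]; ring
  -- r2 = 1 - ‖Tf0‖², nonnegative
  obtain ⟨r2, hr2def⟩ : ∃ r2 : ℝ, r2 = 1 - ‖T f0‖ ^ 2 := ⟨_, rfl⟩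
  have hr2 : 0 ≤ r2 := by
    obtain ⟨f, hf1, hf2⟩ := hCne
    obtain ⟨-, heq⟩ := hdecomp f hf2
    have h1le : ‖T f‖ ^ 2 ≤ 1 := by nlinarith [norm_nonneg (T f)]
    rw [hr2def]
    nlinarith [sq_nonneg ‖T (f - f0)‖]
  obtain ⟨r, hrdef⟩ : ∃ r : ℝ, r = Real.sqrt r2 := ⟨_, rfl⟩
  have hrsq : r ^ 2 = r2 := by rw [hrdef]; exact Real.sq_sqrt hr2
  have hrnn : 0 ≤ r := by rw [hrdef]; exact Real.sqrt_nonneg _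
  -- the compact set K1 and the maximizer
  set K1 : Set F := {u : F | u ∈ N ∧ ‖T u‖ ≤ 1} with hK1def
  have hK1c : IsCompact K1 := by
    apply Metric.isCompact_of_isClosed_isBounded
    · have h1 : IsClosed (N : Set F) := N.closed_of_finiteDimensional
      have h2 : IsClosed {u : F | ‖T u‖ ≤ 1} :=
        isClosed_le T.continuous_of_finiteDimensional.norm continuous_const
      exact h1.inter h2
    · rw [Metric.isBounded_iff_subset_closedBall 0]
      refine ⟨c, fun u hu => ?_⟩
      have h1 := hc u hu.1
      have h2 : (c : ℝ) * ‖T u‖ ≤ (c : ℝ) * 1 :=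
        mul_le_mul_of_nonneg_left hu.2 c.coe_nonneg
      simp only [Metric.mem_closedBall, dist_zero_right]
      linarith
  have hK1ne : K1.Nonempty := ⟨0, ⟨N.zero_mem, by simp⟩⟩
  obtain ⟨u₀, hu₀K, hu₀max⟩ :=
    hK1c.exists_isMaxOn hK1ne
      (Continuous.continuousOn Qt.continuous_of_finiteDimensional.norm)
  obtain ⟨a, hadef⟩ : ∃ a : ℝ, a = ‖Qt u₀‖ ^ 2 := ⟨_, rfl⟩
  have ha0 : 0 ≤ a := by rw [hadef]; exact sq_nonneg _
  -- key property of a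
  have ha_prop : ∀ h ∈ N, ‖Qt h‖ ^ 2 ≤ a * ‖T h‖ ^ 2 := by
    intro h hh
    by_cases hTh : T h = 0
    · have : h = 0 := hinj h hh hTh
      simp [this, hTh, ha0]
    · have hpos : 0 < ‖T h‖ := norm_pos_iff.mpr hTh
      have huN : (‖T h‖⁻¹ • h) ∈ N := N.smul_mem _ hh
      have hTu : ‖T (‖T h‖⁻¹ • h)‖ = 1 := by
        rw [map_smul, norm_smul]
        simp [abs_of_pos (inv_pos.mpr hpos), inv_mul_cancel₀ hpos.ne']
      have hle : ‖Qt (‖T h‖⁻¹ • h)‖ ≤ ‖Qt u₀‖ := hu₀max ⟨huN, le_of_eq hTu⟩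
      have hQ : ‖Qt (‖T h‖⁻¹ • h)‖ = ‖T h‖⁻¹ * ‖Qt h‖ := by
        rw [map_smul, norm_smul]
        simp [abs_of_pos (inv_pos.mpr hpos)]
      have h2 : (‖T h‖⁻¹ * ‖Qt h‖) ^ 2 ≤ a := by
        rw [← hQ, hadef]; exact pow_le_pow_left₀ (norm_nonneg _) hle 2
      have h3 := mul_le_mul_of_nonneg_right h2 (sq_nonneg ‖T h‖)
      calc ‖Qt h‖ ^ 2 = (‖T h‖⁻¹ * ‖Qt h‖) ^ 2 * ‖T h‖ ^ 2 := by
            field_simp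
        _ ≤ a * ‖T h‖ ^ 2 := h3
  -- inner products with Tw for h ∈ N
  have hinnerw : ∀ h ∈ N, ⟪T h, T w⟫ = ⟪T h, T h1⟫ := by
    intro h hh
    have h0 : ⟪T h, T f0⟫ = 0 := by rw [real_inner_comm]; exact hperp h hh
    rw [hTw_eq, inner_add_right, h0, zero_add]
  -- the second feasibility constraint for the pair (a, a‖Th1‖²)
  have hfeas2 : ∀ h ∈ LinearMap.ker Λ, ∀ t : ℝ,
      0 ≤ a * ‖T h‖ ^ 2 + 2 * a * t * (inner ℝ (T h) (T w) : ℝ) +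
        (a * ‖T h1‖ ^ 2) * t ^ 2 := by
    intro h hh t
    have hiw : ⟪T h, T w⟫ = ⟪T h, T h1⟫ := hinnerw h hh
    have hnn : 0 ≤ ‖T h + t • T h1‖ ^ 2 := sq_nonneg _
    have hexp : ‖T h + t • T h1‖ ^ 2
        = ‖T h‖ ^ 2 + 2 * t * ⟪T h, T h1⟫ + t ^ 2 * ‖T h1‖ ^ 2 := by
      rw [@norm_add_sq_real, real_inner_smul_right, norm_smul,
        Real.norm_eq_abs, mul_pow, sq_abs]
      ring
    have h4 := mul_nonneg ha0 hnn
    rw [hexp] at h4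
    rw [hiw]
    nlinarith [h4]
  -- the value of the feasible pair equals a * r2
  have hval : a * (1 - ‖T w‖ ^ 2) + a * ‖T h1‖ ^ 2 = a * r2 := by
    rw [hr2def, hpyth_w]; ring
  -- LHS ≤ ofReal (a * r2), via z = Qt f0
  have hLHS_le : (⨅ z : Z, ⨆ f ∈ {f : F | ‖T f‖ ≤ 1 ∧ Λ f = y},
      ENNReal.ofReal (‖Qt f - z‖ ^ 2)) ≤ ENNReal.ofReal (a * r2) := by
    refine iInf_le_of_le (Qt f0) ?_
    refine iSup₂_le fun f hf => ?_
    obtain ⟨hf1, hf2⟩ := hf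
    obtain ⟨huN, heq⟩ := hdecomp f hf2
    have h1le : ‖T f‖ ^ 2 ≤ 1 := by nlinarith [norm_nonneg (T f)]
    have hQf : Qt f - Qt f0 = Qt (f - f0) := (map_sub Qt f f0).symm
    have hb1 : ‖Qt (f - f0)‖ ^ 2 ≤ a * ‖T (f - f0)‖ ^ 2 := ha_prop _ huN
    have hb2 : ‖T (f - f0)‖ ^ 2 ≤ r2 := by rw [hr2def]; nlinarith
    apply ENNReal.ofReal_le_ofReal
    rw [hQf]
    nlinarith
  -- for each z, ofReal (a * r2) ≤ sup over the feasible set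
  have hsup_ge : ∀ z : Z, ENNReal.ofReal (a * r2) ≤
      ⨆ f ∈ {f : F | ‖T f‖ ≤ 1 ∧ Λ f = y}, ENNReal.ofReal (‖Qt f - z‖ ^ 2) := by
    intro z
    have hmemC : ∀ s : ℝ, s = 1 ∨ s = -1 →
        (f0 + (s * r) • u₀) ∈ {f : F | ‖T f‖ ≤ 1 ∧ Λ f = y} := by
      intro s hs
      have hsabs : s ^ 2 = 1 := by rcases hs with h | h <;> rw [h] <;> ring
      constructor
      · have hx : T (f0 + (s * r) • u₀) = T f0 + (s * r) • T u₀ := by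
          rw [map_add, map_smul]
        have hTu₀ : ‖T u₀‖ ≤ 1 := hu₀K.2
        have hu₀N : u₀ ∈ N := hu₀K.1
        have hTu2 : ‖T u₀‖ ^ 2 ≤ 1 := by nlinarith [norm_nonneg (T u₀)]
        have hexp : ‖T (f0 + (s * r) • u₀)‖ ^ 2
            = ‖T f0‖ ^ 2 + (s * r) ^ 2 * ‖T u₀‖ ^ 2 := by
          rw [hx, @norm_add_sq_real, real_inner_smul_right,
            hperp u₀ hu₀N, norm_smul, Real.norm_eq_abs, mul_pow, sq_abs]
          ring
        have hsr : (s * r) ^ 2 = r2 := by rw [mul_pow, hsabs, one_mul, hrsq]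
        have hle1 : ‖T (f0 + (s * r) • u₀)‖ ^ 2 ≤ 1 := by
          rw [hexp, hsr, hr2def]
          nlinarith [mul_nonneg hr2 (sub_nonneg.mpr hTu2), hr2def]
        nlinarith [norm_nonneg (T (f0 + (s * r) • u₀))]
      · have h0 : Λ u₀ = 0 := hu₀K.1
        show Λ (f0 + (s * r) • u₀) = y
        rw [map_add, map_smul, hΛf0, h0, smul_zero, add_zero]
    -- parallelogram argument
    obtain ⟨x, hxdef⟩ : ∃ x : Z, x = Qt f0 - z := ⟨_, rfl⟩
    obtain ⟨v, hvdef⟩ : ∃ v : Z, v = r • Qt u₀ := ⟨_, rfl⟩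
    have hv2 : ‖v‖ ^ 2 = a * r2 := by
      rw [hvdef, norm_smul, Real.norm_eq_abs, mul_pow, sq_abs, hrsq, hadef]; ring
    have hpar : ‖x + v‖ ^ 2 + ‖x - v‖ ^ 2 = 2 * ‖x‖ ^ 2 + 2 * ‖v‖ ^ 2 := by
      rw [@norm_add_sq_real, @norm_sub_sq_real]; ring
    have hkey : a * r2 ≤ ‖x + v‖ ^ 2 ∨ a * r2 ≤ ‖x - v‖ ^ 2 := by
      by_contra hcon
      push_neg at hcon
      nlinarith [sq_nonneg ‖x‖, hcon.1, hcon.2, hv2]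
    have hQp : Qt (f0 + (1 * r) • u₀) - z = x + v := by
      rw [map_add, map_smul, hxdef, hvdef, one_mul]; abel
    have hQm : Qt (f0 + ((-1) * r) • u₀) - z = x - v := by
      rw [map_add, map_smul, hxdef, hvdef, neg_one_mul, neg_smul]; abel
    rcases hkey with hk | hk
    · refine le_trans ?_ (le_iSup₂ (f0 + (1 * r) • u₀) (hmemC 1 (Or.inl rfl)))
      apply ENNReal.ofReal_le_ofReal
      rw [hQp]; exact hk
    · refine le_trans ?_ (le_iSup₂ (f0 + ((-1) * r) • u₀) (hmemC (-1) (Or.inr rfl)))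
      apply ENNReal.ofReal_le_ofReal
      rw [hQm]; exact hk
  -- assemble
  apply le_antisymm
  · refine le_iInf fun p => ?_
    obtain ⟨⟨a', b'⟩, ha'0, hb'0, hc1, hc2⟩ := p
    refine le_trans hLHS_le (ENNReal.ofReal_le_ofReal ?_)
    show a * r2 ≤ a' * (1 - ‖T w‖ ^ 2) + b'
    -- b' ≥ a' ‖T h1‖²
    have hb'ge : a' * ‖T h1‖ ^ 2 ≤ b' := by
      have h5 : 0 ≤ a' * ‖T h1‖ ^ 2 + 2 * a' * (-1) * (inner ℝ (T h1) (T w) : ℝ) +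
          b' * (-1) ^ 2 := hc2 h1 hh1N (-1)
      have hiw : (inner ℝ (T h1) (T w) : ℝ) = ‖T h1‖ ^ 2 := by
        rw [hinnerw h1 hh1N, real_inner_self_eq_norm_sq]
      rw [hiw] at h5
      nlinarith [h5]
    -- a' ≥ a
    have ha'ge : a ≤ a' := by
      have h6 : ‖Qt u₀‖ ^ 2 ≤ a' * ‖T u₀‖ ^ 2 := hc1 u₀ hu₀K.1
      have hTu₀ : ‖T u₀‖ ≤ 1 := hu₀K.2
      have ha'nn : 0 ≤ a' := ha'0
      have hTu2 : ‖T u₀‖ ^ 2 ≤ 1 := by nlinarith [norm_nonneg (T u₀)]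
      rw [hadef]
      nlinarith [mul_le_mul_of_nonneg_left hTu2 ha'nn]
    have h7 : a' * r2 = a' * (1 - ‖T w‖ ^ 2) + a' * ‖T h1‖ ^ 2 := by
      rw [hr2def, hpyth_w]; ring
    linarith [mul_le_mul_of_nonneg_right ha'ge hr2, h7, hb'ge]
  · refine le_iInf fun z => ?_
    refine le_trans (iInf_le_of_le
      ⟨(a, a * ‖T h1‖ ^ 2), ha0, by positivity, ha_prop, hfeas2⟩
      (le_of_eq ?_)) (hsup_ge z)
    show ENNReal.ofReal (a * (1 - ‖T w‖ ^ 2) + a * ‖T h1‖ ^ 2) = ENNReal.ofReal (a * r2)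
    rw [hval]
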